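/- Under the same persistence-of-excitation and observability hypotheses, the linear system [0, Ψ; 0, Ψ_Ω; −W_{L_0+1}(z) ⊗ I_{n_y}, Ψ_Y]·[T_z; G] = [0; W_{L_0+1}(z) ⊗ z; 0] has a unique solution for T_z ∈ C^{n_y}, and this solution equals the transient T(z) = C(zI−A)^{-1} z (x_0 − x_{2M}) present in the data. -/

import Mathlib

open Matrix Complex

/-- e^{j ω_k} with ω_k = πk/M. -/
noncomputable def specExp (M k : ℕ) : ℂ := Complex.exp (Complex.I * (Real.pi * k / M))

/-- Ψ_L(S_{[0,M-1]}) = [F_L(S_{[0,M-1]}), F_L^*(S_{[1,M-1]})], with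
    F_L(S_{[m,n]}) = [W_L(e^{jω_m}) ⊗ S_m, ..., W_L(e^{jω_n}) ⊗ S_n],
    W_L(z) = (1, z, ..., z^{L-1})ᵀ; rows indexed by Fin L × α. -/
noncomputable def PsiMat (L M : ℕ) {α : Type} (S : Fin M → α → ℂ) :
    Matrix (Fin L × α) (Fin M ⊕ Fin (M - 1)) ℂ :=
  Matrix.of fun p => Sum.elim
    (fun k : Fin M => specExp M k ^ (p.1 : ℕ) * S k p.2)
    (fun k : Fin (M - 1) => (starRingEnd ℂ)
      (specExp M (k + 1) ^ (p.1 : ℕ) * S ⟨k.1 + 1, by have := k.isLt; omega⟩ p.2))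

/-- Controllability matrix [B, AB, ..., A^{nx-1}B]. -/
noncomputable def ctrbMat {nx : ℕ} {ι : Type} [Fintype ι]
    (A : Matrix (Fin nx) (Fin nx) ℝ) (B : Matrix (Fin nx) ι ℝ) :
    Matrix (Fin nx) (Fin nx × ι) ℝ :=
  Matrix.of fun i p => (A ^ (p.1 : ℕ) * B) i p.2

/-- k-step observability matrix 𝒪_k = [C; CA; ...; CA^{k-1}]. -/
noncomputable def obsMat (nx ny k : ℕ) (A : Matrix (Fin nx) (Fin nx) ℝ)
    (C : Matrix (Fin ny) (Fin nx) ℝ) : Matrix (Fin k × Fin ny) (Fin nx) ℝ :=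
  Matrix.of fun p j => (C * A ^ (p.1 : ℕ)) p.2 j

/-- Observability index ℓ_Σ: smallest k at which the rank of 𝒪_k saturates. -/
noncomputable def obsIndex (nx ny : ℕ) (A : Matrix (Fin nx) (Fin nx) ℝ)
    (C : Matrix (Fin ny) (Fin nx) ℝ) : ℕ :=
  sInf {k : ℕ | (obsMat nx ny k A C).rank = (obsMat nx ny nx A C).rank}


namespace TransAux

/-- Full row rank implies trivial left kernel. -/
lemma leftker_of_rank {m n : Type} [Fintype m] [Fintype n] (K : Matrix m n ℂ)
    (h : K.rank = Fintype.card m) : ∀ y : m → ℂ, y ᵥ* K = 0 → y = 0 := by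
  intro y hy
  have h1 : Kᵀ.rank = Fintype.card m := by rw [Matrix.rank_transpose]; exact h
  have h2 := LinearMap.finrank_range_add_finrank_ker (Kᵀ.mulVecLin)
  rw [show Module.finrank ℂ (LinearMap.range Kᵀ.mulVecLin) = Kᵀ.rank from rfl, h1,
    Module.finrank_fintype_fun_eq_card] at h2
  have h3 : Module.finrank ℂ (LinearMap.ker Kᵀ.mulVecLin) = 0 := by omega
  have h4 : LinearMap.ker Kᵀ.mulVecLin = ⊥ := Submodule.finrank_eq_zero.mp h3
  have h5 : y ∈ LinearMap.ker Kᵀ.mulVecLin := by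
    simp only [LinearMap.mem_ker, mulVecLin_apply, Matrix.mulVec_transpose]; exact hy
  rw [h4] at h5; simpa using h5

/-- Trivial left kernel implies mulVec surjective. -/
lemma mulVec_surj_of_leftker {m n : Type} [Fintype m] [Fintype n] (K : Matrix m n ℂ)
    (h : ∀ y : m → ℂ, y ᵥ* K = 0 → y = 0) : Function.Surjective (K.mulVec ·) := by
  have hinj : Function.Injective (Kᵀ.mulVecLin) := by
    rw [← LinearMap.ker_eq_bot]
    rw [Submodule.eq_bot_iff]
    intro y hy
    simp only [LinearMap.mem_ker, mulVecLin_apply, Matrix.mulVec_transpose] at hy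
    exact h y hy
  have h1 : Kᵀ.rank = Fintype.card m := by
    rw [show Kᵀ.rank = Module.finrank ℂ (LinearMap.range Kᵀ.mulVecLin) from rfl,
      LinearMap.finrank_range_of_inj hinj, Module.finrank_fintype_fun_eq_card]
  have h2 : K.rank = Fintype.card m := by rw [← Matrix.rank_transpose]; exact h1
  have h3 : LinearMap.range K.mulVecLin = ⊤ := by
    apply Submodule.eq_top_of_finrank_eq
    rw [show Module.finrank ℂ (LinearMap.range K.mulVecLin) = K.rank from rfl, h2,
      Module.finrank_fintype_fun_eq_card]
  intro t
  have : t ∈ LinearMap.range K.mulVecLin := by rw [h3]; trivial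
  obtain ⟨G, hG⟩ := this
  exact ⟨G, by simpa [mulVecLin_apply] using hG⟩

end TransAux

namespace TransAux

variable {nx ny : ℕ} (A : Matrix (Fin nx) (Fin nx) ℝ) (C : Matrix (Fin ny) (Fin nx) ℝ)

noncomputable def NK (k : ℕ) : Submodule ℝ (Fin nx → ℝ) :=
  LinearMap.ker (obsMat nx ny k A C).mulVecLin

lemma mem_NK {k : ℕ} {v : Fin nx → ℝ} :
    v ∈ NK A C k ↔ ∀ i < k, (C * A ^ i).mulVec v = 0 := by
  constructor
  · intro h i hi
    funext p
    have : (obsMat nx ny k A C).mulVec v (⟨i, hi⟩, p) = ((C * A ^ i).mulVec v) p := rfl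
    rw [← this]
    simp only [NK, LinearMap.mem_ker, mulVecLin_apply] at h
    rw [h]; rfl
  · intro h
    simp only [NK, LinearMap.mem_ker, mulVecLin_apply]
    funext r
    obtain ⟨i, p⟩ := r
    have : (obsMat nx ny k A C).mulVec v (i, p) = ((C * A ^ (i : ℕ)).mulVec v) p := rfl
    rw [this, h _ i.isLt]; rfl

lemma NK_antitone {k k' : ℕ} (h : k ≤ k') : NK A C k' ≤ NK A C k := by
  intro v hv
  rw [mem_NK] at hv ⊢
  exact fun i hi => hv i (lt_of_lt_of_le hi h)

lemma NK_rank_nullity (k : ℕ) :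
    (obsMat nx ny k A C).rank + Module.finrank ℝ (NK A C k : Submodule ℝ (Fin nx → ℝ)) = nx := by
  have := LinearMap.finrank_range_add_finrank_ker (obsMat nx ny k A C).mulVecLin
  rw [Module.finrank_fintype_fun_eq_card, Fintype.card_fin] at this
  exact this

lemma NK_step {k : ℕ} (h : NK A C k = NK A C (k + 1)) : NK A C (k + 1) = NK A C (k + 2) := by
  apply le_antisymm _ (NK_antitone A C (by omega))
  intro v hv
  rw [mem_NK] at hv ⊢
  intro i hi
  rcases Nat.lt_or_ge i (k + 1) with h' | h'
  · exact hv i h'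
  · have hik : i = k + 1 := by omega
    subst hik
    have hAv : A.mulVec v ∈ NK A C k := by
      rw [mem_NK]
      intro j hj
      rw [Matrix.mulVec_mulVec, Matrix.mul_assoc, ← pow_succ]
      exact hv (j + 1) (by omega)
    rw [h, mem_NK] at hAv
    have := hAv k (by omega)
    rw [Matrix.mulVec_mulVec, Matrix.mul_assoc, ← pow_succ] at this
    exact this

lemma NK_stab {k : ℕ} (h : NK A C k = NK A C (k + 1)) : ∀ j, NK A C (k + j) = NK A C k := by
  have hstep : ∀ j, NK A C (k + j) = NK A C (k + j + 1) := by
    intro j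
    induction j with
    | zero => exact h
    | succ n ih => exact NK_step A C ih
  intro j
  induction j with
  | zero => rfl
  | succ n ih => rw [← ih]; exact (hstep n).symm

lemma key_obs {L0 : ℕ} (hL0 : obsIndex nx ny A C ≤ L0) :
    ∀ v ∈ NK A C L0, ∀ i, (C * A ^ i).mulVec v = 0 := by
  set S := {k : ℕ | (obsMat nx ny k A C).rank = (obsMat nx ny nx A C).rank} with hS
  have hnxS : nx ∈ S := rfl
  obtain ⟨m, hm⟩ : ∃ m, m = sInf S := ⟨_, rfl⟩
  have hmS : m ∈ S := hm ▸ Nat.sInf_mem ⟨nx, hnxS⟩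
  have hmnx : m ≤ nx := hm ▸ Nat.sInf_le hnxS
  have hmL0 : m ≤ L0 := le_trans (le_of_eq hm) hL0
  have claim1 : NK A C m = NK A C (m + 1) := by
    rcases lt_or_eq_of_le hmnx with hlt | heq
    · -- m < nx
      have h1 : NK A C nx ≤ NK A C (m + 1) := NK_antitone A C (by omega)
      have h2 : NK A C (m + 1) ≤ NK A C m := NK_antitone A C (by omega)
      have e1 := NK_rank_nullity A C m
      have e2 := NK_rank_nullity A C (m + 1)
      have e3 := NK_rank_nullity A C nx
      have hr : (obsMat nx ny m A C).rank = (obsMat nx ny nx A C).rank := hmS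
      have f1 : Module.finrank ℝ (NK A C nx : Submodule ℝ (Fin nx → ℝ))
          ≤ Module.finrank ℝ (NK A C (m+1) : Submodule ℝ (Fin nx → ℝ)) :=
        Submodule.finrank_mono h1
      have f2 : Module.finrank ℝ (NK A C (m+1) : Submodule ℝ (Fin nx → ℝ))
          ≤ Module.finrank ℝ (NK A C m : Submodule ℝ (Fin nx → ℝ)) :=
        Submodule.finrank_mono h2
      have feq : Module.finrank ℝ (NK A C (m+1) : Submodule ℝ (Fin nx → ℝ))
          = Module.finrank ℝ (NK A C m : Submodule ℝ (Fin nx → ℝ)) := by omega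
      exact (Submodule.eq_of_le_of_finrank_eq h2 feq).symm
    · -- m = nx
      rw [heq]
      have hlt : ∀ k < nx, Module.finrank ℝ (NK A C (k+1) : Submodule ℝ (Fin nx → ℝ))
          < Module.finrank ℝ (NK A C k : Submodule ℝ (Fin nx → ℝ)) := by
        intro k hk
        by_contra hcon
        push_neg at hcon
        have hle : NK A C (k+1) ≤ NK A C k := NK_antitone A C (by omega)
        have hfeq : Module.finrank ℝ (NK A C (k+1) : Submodule ℝ (Fin nx → ℝ))
            = Module.finrank ℝ (NK A C k : Submodule ℝ (Fin nx → ℝ)) :=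
          le_antisymm (Submodule.finrank_mono hle) hcon
        have hkeq : NK A C k = NK A C (k+1) := (Submodule.eq_of_le_of_finrank_eq hle hfeq).symm
        have := NK_stab A C hkeq (nx - k)
        have hknx : NK A C nx = NK A C k := by
          rw [← this]; congr 1; omega
        have e1 := NK_rank_nullity A C k
        have e2 := NK_rank_nullity A C nx
        have : (obsMat nx ny k A C).rank = (obsMat nx ny nx A C).rank := by
          rw [hknx] at e2; omega
        have : m ≤ k := hm ▸ Nat.sInf_le this
        omega
      have hbound : ∀ k ≤ nx, Module.finrank ℝ (NK A C k : Submodule ℝ (Fin nx → ℝ)) + k ≤ nx := by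
        intro k
        induction k with
        | zero =>
          intro _
          have := NK_rank_nullity A C 0
          omega
        | succ n ih =>
          intro hn
          have h1 := ih (by omega)
          have h2 := hlt n (by omega)
          omega
      have hzero : Module.finrank ℝ (NK A C nx : Submodule ℝ (Fin nx → ℝ)) = 0 := by
        have := hbound nx le_rfl; omega
      have hbot : NK A C nx = ⊥ := Submodule.finrank_eq_zero.mp hzero
      apply le_antisymm
      · rw [hbot]; exact bot_le
      · exact NK_antitone A C (by omega)
  intro v hv i
  have hvm : v ∈ NK A C m := NK_antitone A C hmL0 hv
  have := NK_stab A C claim1 (i + 1)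
  rw [← this] at hvm
  rw [mem_NK] at hvm
  exact hvm i (by omega)

end TransAux

namespace TransAux

variable {nx : ℕ} {κ ι : Type} [Fintype κ] [Fintype ι]

/-- weighted state sum -/
noncomputable def Esum (μ : κ → ℂ) (x : κ → Fin nx → ℂ) (G : κ → ℂ) (i : ℕ) : Fin nx → ℂ :=
  fun j => ∑ c, μ c ^ i * x c j * G c

/-- weighted input sum -/
noncomputable def Ssum (μ : κ → ℂ) (w : κ → ι → ℂ) (G : κ → ℂ) (i : ℕ) : ι → ℂ :=
  fun q => ∑ c, μ c ^ i * w c q * G c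

lemma sum_mulVec_comm {ρ n' : Type} [Fintype n'] (R : Matrix ρ n' ℂ)
    (v : κ → n' → ℂ) (g : κ → ℂ) (p : ρ) :
    ∑ c, g c * (R *ᵥ (v c)) p = (R *ᵥ (fun t => ∑ c, g c * v c t)) p := by
  simp only [Matrix.mulVec, dotProduct, Finset.mul_sum]
  rw [Finset.sum_comm]
  apply Finset.sum_congr rfl
  intro t _
  apply Finset.sum_congr rfl
  intro c _
  ring

lemma Esum_rec (Aℂ : Matrix (Fin nx) (Fin nx) ℂ) (Bt : Matrix (Fin nx) ι ℂ)
    (μ : κ → ℂ) (w : κ → ι → ℂ) (x : κ → Fin nx → ℂ)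
    (hdyn : ∀ c, μ c • x c = Aℂ *ᵥ (x c) + Bt *ᵥ (w c)) (G : κ → ℂ) (i : ℕ) :
    Esum μ x G (i + 1) = Aℂ *ᵥ (Esum μ x G i) + Bt *ᵥ (Ssum μ w G i) := by
  funext j
  have step : ∀ c, μ c ^ (i+1) * x c j * G c
      = (μ c ^ i * G c) * (Aℂ *ᵥ (x c)) j + (μ c ^ i * G c) * (Bt *ᵥ (w c)) j := by
    intro c
    have h1 : μ c * x c j = (Aℂ *ᵥ (x c)) j + (Bt *ᵥ (w c)) j := by
      have := congrFun (hdyn c) j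
      simpa [Pi.smul_apply, smul_eq_mul] using this
    calc μ c ^ (i+1) * x c j * G c = (μ c ^ i * G c) * (μ c * x c j) := by ring
    _ = _ := by rw [h1]; ring
  show ∑ c, μ c ^ (i+1) * x c j * G c = _
  rw [Finset.sum_congr rfl (fun c _ => step c), Finset.sum_add_distrib,
    sum_mulVec_comm Aℂ x (fun c => μ c ^ i * G c) j,
    sum_mulVec_comm Bt w (fun c => μ c ^ i * G c) j]
  have ex : (fun t => ∑ c, (μ c ^ i * G c) * x c t) = Esum μ x G i := by
    funext t; apply Finset.sum_congr rfl; intro c _; ring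
  have ew : (fun t => ∑ c, (μ c ^ i * G c) * w c t) = Ssum μ w G i := by
    funext t; apply Finset.sum_congr rfl; intro c _; ring
  rw [ex, ew]; rfl

/-- output sum identity -/
lemma out_sum {ρ ρu : Type} [Fintype ρu] (Cc : Matrix ρ (Fin nx) ℂ) (Dc : Matrix ρ ρu ℂ)
    (μ : κ → ℂ) (x : κ → Fin nx → ℂ) (u : κ → ρu → ℂ) (y : κ → ρ → ℂ)
    (hout : ∀ c, y c = Cc *ᵥ (x c) + Dc *ᵥ (u c)) (G : κ → ℂ) (i : ℕ) (p : ρ) :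
    ∑ c, μ c ^ i * y c p * G c
      = (Cc *ᵥ (Esum μ x G i)) p + (Dc *ᵥ (Ssum μ u G i)) p := by
  have step : ∀ c, μ c ^ i * y c p * G c
      = (μ c ^ i * G c) * (Cc *ᵥ (x c)) p + (μ c ^ i * G c) * (Dc *ᵥ (u c)) p := by
    intro c
    rw [hout c]
    simp only [Pi.add_apply]
    ring
  rw [Finset.sum_congr rfl (fun c _ => step c), Finset.sum_add_distrib,
    sum_mulVec_comm Cc x (fun c => μ c ^ i * G c) p,
    sum_mulVec_comm Dc u (fun c => μ c ^ i * G c) p]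
  have ex : (fun t => ∑ c, (μ c ^ i * G c) * x c t) = Esum μ x G i := by
    funext t; apply Finset.sum_congr rfl; intro c _; ring
  have ew : (fun t => ∑ c, (μ c ^ i * G c) * u c t) = Ssum μ u G i := by
    funext t; apply Finset.sum_congr rfl; intro c _; ring
  rw [ex, ew]

end TransAux

namespace TransAux

variable {nx : ℕ} {κ ι : Type} [Fintype κ] [Fintype ι]

lemma kernel_triv (L : ℕ) (hL : 1 ≤ L)
    (Aℂ : Matrix (Fin nx) (Fin nx) ℂ) (Bt : Matrix (Fin nx) ι ℂ)
    (μ : κ → ℂ) (w : κ → ι → ℂ) (x : κ → Fin nx → ℂ)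
    (hdyn : ∀ c, μ c • x c = Aℂ *ᵥ (x c) + Bt *ᵥ (w c))
    (hPE : ∀ g : ℕ → ι → ℂ,
      (∀ c, ∑ i ∈ Finset.range (L + nx), ∑ q, g i q * (μ c ^ i * w c q) = 0) →
      ∀ i < L + nx, ∀ q, g i q = 0)
    (hB : ∀ b : Fin nx → ℂ, (∀ m, m < nx → (b ᵥ* (Aℂ ^ m)) ᵥ* Bt = 0) → b = 0)
    (f₀ : ℕ → ι → ℂ) (hf₀ : ∀ i, L ≤ i → f₀ i = 0) (b : Fin nx → ℂ)
    (h : ∀ c, (∑ i ∈ Finset.range (L + nx), ∑ q, f₀ i q * (μ c ^ i * w c q)) + b ⬝ᵥ x c = 0) :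
    (∀ i, f₀ i = 0) ∧ b = 0 := by
  obtain ⟨K, hK⟩ : ∃ K, L + nx = K + 1 := ⟨L + nx - 1, by omega⟩
  set F : ℕ → ℕ → ι → ℂ := fun j => Nat.rec f₀
    (fun j' Fj => fun i => if i = 0 then (b ᵥ* Aℂ ^ j') ᵥ* Bt else Fj (i - 1)) j with hF
  have hF0 : F 0 = f₀ := rfl
  have hFs : ∀ j i, F (j + 1) i = if i = 0 then (b ᵥ* Aℂ ^ j) ᵥ* Bt else F j (i - 1) :=
    fun _ _ => rfl
  have hsupp : ∀ j i, L + j ≤ i → F j i = 0 := by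
    intro j
    induction j with
    | zero => exact hf₀
    | succ n ih =>
      intro i hi
      rw [hFs, if_neg (by omega)]
      exact ih (i - 1) (by omega)
  have hrel : ∀ j, j ≤ nx → ∀ c,
      (∑ i ∈ Finset.range (L + nx), ∑ q, F j i q * (μ c ^ i * w c q))
        + (b ᵥ* Aℂ ^ j) ⬝ᵥ x c = 0 := by
    intro j
    induction j with
    | zero =>
      intro _ c
      simpa [hF0, pow_zero, Matrix.vecMul_one] using h c
    | succ n ih =>
      intro hn c
      have Hc := ih (by omega) c
      have e1 : ∑ i ∈ Finset.range (L + nx), ∑ q, F (n + 1) i q * (μ c ^ i * w c q)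
          = (∑ i ∈ Finset.range K, ∑ q, F n i q * (μ c ^ (i + 1) * w c q))
            + ((b ᵥ* Aℂ ^ n) ᵥ* Bt) ⬝ᵥ w c := by
        have t1 : ∑ i ∈ Finset.range K, ∑ q, F (n + 1) (i + 1) q * (μ c ^ (i + 1) * w c q)
            = ∑ i ∈ Finset.range K, ∑ q, F n i q * (μ c ^ (i + 1) * w c q) := by
          apply Finset.sum_congr rfl
          intro i _
          apply Finset.sum_congr rfl
          intro q _
          rw [hFs, if_neg (by omega)]
          simp
        have t2 : ∑ q, F (n + 1) 0 q * (μ c ^ 0 * w c q)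
            = ((b ᵥ* Aℂ ^ n) ᵥ* Bt) ⬝ᵥ w c := by
          simp only [dotProduct]
          apply Finset.sum_congr rfl
          intro q _
          rw [hFs, if_pos rfl, pow_zero, one_mul]
        rw [hK, Finset.sum_range_succ', t1, t2]
      have e2 : μ c * (∑ i ∈ Finset.range (L + nx), ∑ q, F n i q * (μ c ^ i * w c q))
          = ∑ i ∈ Finset.range K, ∑ q, F n i q * (μ c ^ (i + 1) * w c q) := by
        rw [hK, Finset.mul_sum, Finset.sum_range_succ]
        have hz : F n K = 0 := hsupp n K (by omega)
        simp only [hz, Pi.zero_apply, zero_mul, Finset.sum_const_zero, mul_zero, add_zero]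
        apply Finset.sum_congr rfl
        intro i _
        rw [Finset.mul_sum]
        apply Finset.sum_congr rfl
        intro q _
        ring
      have e3 : μ c * ((b ᵥ* Aℂ ^ n) ⬝ᵥ x c)
          = (b ᵥ* Aℂ ^ (n + 1)) ⬝ᵥ x c + ((b ᵥ* Aℂ ^ n) ᵥ* Bt) ⬝ᵥ w c := by
        calc μ c * ((b ᵥ* Aℂ ^ n) ⬝ᵥ x c)
            = (b ᵥ* Aℂ ^ n) ⬝ᵥ (μ c • x c) := by
              rw [dotProduct_smul]; simp [smul_eq_mul]
          _ = (b ᵥ* Aℂ ^ n) ⬝ᵥ (Aℂ *ᵥ x c) + (b ᵥ* Aℂ ^ n) ⬝ᵥ (Bt *ᵥ w c) := by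
              rw [hdyn c, dotProduct_add]
          _ = _ := by
              rw [Matrix.dotProduct_mulVec, Matrix.dotProduct_mulVec,
                Matrix.vecMul_vecMul, ← pow_succ]
      have hμ : μ c * ((∑ i ∈ Finset.range (L + nx), ∑ q, F n i q * (μ c ^ i * w c q))
          + (b ᵥ* Aℂ ^ n) ⬝ᵥ x c) = 0 := by rw [Hc, mul_zero]
      rw [mul_add, e2, e3] at hμ
      rw [e1]
      linear_combination hμ
  -- Cayley–Hamilton combination
  have hdeg : (Aℂ.charpoly).natDegree = nx := by
    rw [Matrix.charpoly_natDegree_eq_dim, Fintype.card_fin]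
  have hCH : ∑ j ∈ Finset.range (nx + 1), (Aℂ.charpoly).coeff j • Aℂ ^ j = 0 := by
    have := Matrix.aeval_self_charpoly Aℂ
    rwa [Polynomial.aeval_eq_sum_range, hdeg] at this
  have hcoefftop : (Aℂ.charpoly).coeff nx = 1 := by
    have := (Matrix.charpoly_monic Aℂ).coeff_natDegree
    rwa [hdeg] at this
  set g : ℕ → ι → ℂ := fun i q => ∑ j ∈ Finset.range (nx + 1), (Aℂ.charpoly).coeff j * F j i q
    with hg
  have hgzero : ∀ i, i < L + nx → ∀ q, g i q = 0 := by
    apply hPE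
    intro c
    set φ : Matrix (Fin nx) (Fin nx) ℂ →ₗ[ℂ] ℂ :=
      { toFun := fun Mm => (b ᵥ* Mm) ⬝ᵥ x c
        map_add' := by
          intro M N
          show (b ᵥ* (M + N)) ⬝ᵥ x c = (b ᵥ* M) ⬝ᵥ x c + (b ᵥ* N) ⬝ᵥ x c
          rw [Matrix.vecMul_add, add_dotProduct]
        map_smul' := by
          intro a M
          show (b ᵥ* (a • M)) ⬝ᵥ x c = a • ((b ᵥ* M) ⬝ᵥ x c)
          simp only [Matrix.vecMul, dotProduct, Matrix.smul_apply, smul_eq_mul]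
          rw [Finset.mul_sum]
          apply Finset.sum_congr rfl
          intro t _
          rw [Finset.sum_mul, Finset.sum_mul, Finset.mul_sum]
          apply Finset.sum_congr rfl
          intro i _
          ring } with hφ
    have c1 : ∑ i ∈ Finset.range (L + nx), ∑ q, g i q * (μ c ^ i * w c q)
        = ∑ j ∈ Finset.range (nx + 1), (Aℂ.charpoly).coeff j
            * (∑ i ∈ Finset.range (L + nx), ∑ q, F j i q * (μ c ^ i * w c q)) := by
      calc ∑ i ∈ Finset.range (L + nx), ∑ q, g i q * (μ c ^ i * w c q)
          = ∑ i ∈ Finset.range (L + nx), ∑ q, ∑ j ∈ Finset.range (nx + 1),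
              ((Aℂ.charpoly).coeff j * F j i q) * (μ c ^ i * w c q) := by
            apply Finset.sum_congr rfl
            intro i _
            apply Finset.sum_congr rfl
            intro q _
            rw [hg]
            exact Finset.sum_mul _ _ _
        _ = ∑ i ∈ Finset.range (L + nx), ∑ j ∈ Finset.range (nx + 1), ∑ q,
              ((Aℂ.charpoly).coeff j * F j i q) * (μ c ^ i * w c q) :=
            Finset.sum_congr rfl (fun i _ => Finset.sum_comm)
        _ = ∑ j ∈ Finset.range (nx + 1), ∑ i ∈ Finset.range (L + nx), ∑ q,
              ((Aℂ.charpoly).coeff j * F j i q) * (μ c ^ i * w c q) := Finset.sum_comm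
        _ = _ := by
            apply Finset.sum_congr rfl
            intro j _
            rw [Finset.mul_sum]
            apply Finset.sum_congr rfl
            intro i _
            rw [Finset.mul_sum]
            apply Finset.sum_congr rfl
            intro q _
            ring
    have c2 : ∀ j ∈ Finset.range (nx + 1),
        (Aℂ.charpoly).coeff j
            * (∑ i ∈ Finset.range (L + nx), ∑ q, F j i q * (μ c ^ i * w c q))
          = -((Aℂ.charpoly).coeff j • φ (Aℂ ^ j)) := by
      intro j hj
      have hj' : j ≤ nx := by
        have := Finset.mem_range.mp hj
        omega
      have h4 : ∑ i ∈ Finset.range (L + nx), ∑ q, F j i q * (μ c ^ i * w c q)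
          = -((b ᵥ* Aℂ ^ j) ⬝ᵥ x c) := eq_neg_of_add_eq_zero_left (hrel j hj' c)
      rw [h4]
      have hφj : φ (Aℂ ^ j) = (b ᵥ* Aℂ ^ j) ⬝ᵥ x c := rfl
      rw [hφj, smul_eq_mul]
      ring
    calc ∑ i ∈ Finset.range (L + nx), ∑ q, g i q * (μ c ^ i * w c q)
        = ∑ j ∈ Finset.range (nx + 1), -((Aℂ.charpoly).coeff j • φ (Aℂ ^ j)) := by
          rw [c1]
          exact Finset.sum_congr rfl c2
      _ = -(∑ j ∈ Finset.range (nx + 1), (Aℂ.charpoly).coeff j • φ (Aℂ ^ j)) := by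
          rw [Finset.sum_neg_distrib]
      _ = -(φ (∑ j ∈ Finset.range (nx + 1), (Aℂ.charpoly).coeff j • Aℂ ^ j)) := by
          congr 1
          rw [map_sum]
          exact Finset.sum_congr rfl (fun j _ => (_root_.map_smul φ _ _).symm)
      _ = 0 := by rw [hCH, map_zero, neg_zero]
  -- explicit formulas for F
  have hFform : ∀ j i, j ≤ i → F j i = f₀ (i - j) := by
    intro j
    induction j with
    | zero => intro i _; rfl
    | succ n ih =>
      intro i hi
      rw [hFs, if_neg (by omega), ih (i - 1) (by omega),
        show i - 1 - n = i - (n + 1) from by omega]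
  have hFlow : ∀ j i, i < j → F j i = (b ᵥ* Aℂ ^ (j - 1 - i)) ᵥ* Bt := by
    intro j
    induction j with
    | zero => intro i hi; exact absurd hi (Nat.not_lt_zero i)
    | succ n ih =>
      intro i hi
      rw [hFs]
      by_cases h0 : i = 0
      · subst h0
        rw [if_pos rfl]
        norm_num
      · rw [if_neg h0, ih (i - 1) (by omega),
          show n - 1 - (i - 1) = n + 1 - 1 - i from by omega]
  -- extraction of the f₀-part
  have hkey : ∀ t m, L ≤ m + t → f₀ m = 0 := by
    intro t
    induction t with
    | zero => intro m hm; exact hf₀ m (by omega)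
    | succ n ih =>
      intro m hm
      by_cases hc : L ≤ m + n
      · exact ih m hc
      · funext q
        have hiq := hgzero (m + nx) (by omega) q
        simp only [hg] at hiq
        rw [Finset.sum_range_succ] at hiq
        have hrest : ∀ j ∈ Finset.range nx, (Aℂ.charpoly).coeff j * F j (m + nx) q = 0 := by
          intro j hj
          have hj' : j < nx := Finset.mem_range.mp hj
          rw [hFform j (m + nx) (by omega)]
          have h5 : f₀ (m + nx - j) = 0 := ih (m + nx - j) (by omega)
          rw [h5]
          simp
        rw [Finset.sum_eq_zero hrest, zero_add, hcoefftop, one_mul,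
          hFform nx (m + nx) (by omega)] at hiq
        rw [show m + nx - nx = m from by omega] at hiq
        exact hiq
  have hf0_all : ∀ i, f₀ i = 0 := fun i => hkey L i (by omega)
  -- extraction of the b-part
  have hbm : ∀ m, m < nx → (b ᵥ* Aℂ ^ m) ᵥ* Bt = 0 := by
    intro m
    induction m using Nat.strong_induction_on with
    | _ m ih =>
      intro hm
      funext q
      have hiq := hgzero (nx - 1 - m) (by omega) q
      simp only [hg] at hiq
      rw [Finset.sum_range_succ] at hiq
      have hrest : ∀ j ∈ Finset.range nx,
          (Aℂ.charpoly).coeff j * F j (nx - 1 - m) q = 0 := by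
        intro j hj
        have hj' : j < nx := Finset.mem_range.mp hj
        by_cases hji : j ≤ nx - 1 - m
        · rw [hFform j _ hji, hf0_all]
          simp
        · rw [hFlow j _ (by omega), ih (j - 1 - (nx - 1 - m)) (by omega) (by omega)]
          simp
      rw [Finset.sum_eq_zero hrest, zero_add, hcoefftop, one_mul,
        hFlow nx _ (by omega)] at hiq
      rw [show nx - 1 - (nx - 1 - m) = m from by omega] at hiq
      exact hiq
  exact ⟨hf0_all, hB b hbm⟩

end TransAux

namespace TransAux

noncomputable def colWt (M : ℕ) : Fin M ⊕ Fin (M - 1) → ℂ :=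
  Sum.elim (fun k => specExp M k) (fun k => (starRingEnd ℂ) (specExp M (k + 1)))

noncomputable def colS {M : ℕ} {α : Type} (S : Fin M → α → ℂ) :
    Fin M ⊕ Fin (M - 1) → α → ℂ :=
  Sum.elim (fun k => S k)
    (fun k a => (starRingEnd ℂ) (S ⟨k.1 + 1, by have := k.isLt; omega⟩ a))

lemma psi_apply {L M : ℕ} {α : Type} (S : Fin M → α → ℂ) (i : Fin L) (p : α)
    (c : Fin M ⊕ Fin (M - 1)) :
    PsiMat L M S (i, p) c = colWt M c ^ (i : ℕ) * colS S c p := by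
  cases c with
  | inl k => rfl
  | inr k => simp [PsiMat, colWt, colS, _root_.map_mul, _root_.map_pow]

lemma psi_mulVec {L M : ℕ} {α : Type} [Fintype α] (S : Fin M → α → ℂ)
    (G : Fin M ⊕ Fin (M - 1) → ℂ) (i : Fin L) (p : α) :
    (PsiMat L M S *ᵥ G) (i, p) = ∑ c, colWt M c ^ (i : ℕ) * colS S c p * G c := by
  simp only [Matrix.mulVec, dotProduct, psi_apply]

lemma conj_mulVec_real {a b : ℕ} (R : Matrix (Fin a) (Fin b) ℝ) (v : Fin b → ℂ) (p : Fin a) :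
    (starRingEnd ℂ) ((R.map (Complex.ofReal) *ᵥ v) p)
      = ((R.map (Complex.ofReal)) *ᵥ (fun t => (starRingEnd ℂ) (v t))) p := by
  simp [Matrix.mulVec, dotProduct, map_sum, _root_.map_mul, Matrix.map_apply, Complex.conj_ofReal]

lemma map_mul_pow {n m' : ℕ} (R : Matrix (Fin m') (Fin n) ℝ) (A : Matrix (Fin n) (Fin n) ℝ)
    (i : ℕ) : ((R * A ^ i).map (Complex.ofReal) : Matrix (Fin m') (Fin n) ℂ)
      = (R.map Complex.ofReal) * (A.map Complex.ofReal) ^ i := by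
  have h1 : ((A ^ i).map (Complex.ofReal) : Matrix (Fin n) (Fin n) ℂ)
      = (A.map Complex.ofReal) ^ i := by
    have := map_pow (Complex.ofRealHom.mapMatrix) A i
    exact this
  rw [show ((R * A ^ i).map (Complex.ofReal) : Matrix (Fin m') (Fin n) ℂ)
      = (R.map Complex.ofReal) * ((A ^ i).map Complex.ofReal) from Matrix.map_mul (f := Complex.ofRealHom), h1]


lemma map_pow_mul {n m' : ℕ} (A : Matrix (Fin n) (Fin n) ℝ) (R : Matrix (Fin n) (Fin m') ℝ)
    (i : ℕ) : ((A ^ i * R).map (Complex.ofReal) : Matrix (Fin n) (Fin m') ℂ)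
      = (A.map Complex.ofReal) ^ i * (R.map Complex.ofReal) := by
  have h1 : ((A ^ i).map (Complex.ofReal) : Matrix (Fin n) (Fin n) ℂ)
      = (A.map Complex.ofReal) ^ i := by
    have := map_pow (Complex.ofRealHom.mapMatrix) A i
    exact this
  rw [show ((A ^ i * R).map (Complex.ofReal) : Matrix (Fin n) (Fin m') ℂ)
      = ((A ^ i).map Complex.ofReal) * (R.map Complex.ofReal)
      from Matrix.map_mul (f := Complex.ofRealHom), h1]

lemma mulVec_map_eq_zero_iff {a b : ℕ} (R : Matrix (Fin a) (Fin b) ℝ) (v : Fin b → ℂ) :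
    (R.map (Complex.ofReal)) *ᵥ v = 0 ↔
      (R *ᵥ (fun j => (v j).re) = 0 ∧ R *ᵥ (fun j => (v j).im) = 0) := by
  have hre : ∀ p, ((R.map (Complex.ofReal) *ᵥ v) p).re = (R *ᵥ fun j => (v j).re) p := by
    intro p
    simp [Matrix.mulVec, dotProduct, Complex.re_sum, Matrix.map_apply]
  have him : ∀ p, ((R.map (Complex.ofReal) *ᵥ v) p).im = (R *ᵥ fun j => (v j).im) p := by
    intro p
    simp [Matrix.mulVec, dotProduct, Complex.im_sum, Matrix.map_apply]
  constructor
  · intro h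
    constructor <;> funext p
    · rw [← hre p, congrFun h p]; rfl
    · rw [← him p, congrFun h p]; rfl
  · rintro ⟨h1, h2⟩
    funext p
    apply Complex.ext
    · rw [hre p, h1]; rfl
    · rw [him p, h2]; rfl

lemma surj_of_rank_real {m n : Type} [Fintype m] [Fintype n] (K : Matrix m n ℝ)
    (h : K.rank = Fintype.card m) : ∀ v : m → ℝ, ∃ g, K *ᵥ g = v := by
  have h3 : LinearMap.range K.mulVecLin = ⊤ := by
    apply Submodule.eq_top_of_finrank_eq
    rw [show Module.finrank ℝ (LinearMap.range K.mulVecLin) = K.rank from rfl, h,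
      Module.finrank_fintype_fun_eq_card]
  intro v
  have : v ∈ LinearMap.range K.mulVecLin := by rw [h3]; trivial
  obtain ⟨g, hg⟩ := this
  exact ⟨g, by simpa [mulVecLin_apply] using hg⟩

end TransAux

/-- Theorem 4(ii), transient evaluation: under the same persistence-of-
    excitation and observability hypotheses, the linear system (sep-2) has a unique
    solution for T_z, and it equals the transient T(z) = C(zI-A)⁻¹ z (x₀ - x_{2M}). -/
theorem transient_evaluation (M nx nu ny L0 : ℕ)
    (A : Matrix (Fin nx) (Fin nx) ℝ) (B : Matrix (Fin nx) (Fin nu) ℝ)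
    (C : Matrix (Fin ny) (Fin nx) ℝ) (D : Matrix (Fin ny) (Fin nu) ℝ)
    (x0 x2M : Fin nx → ℝ)
    (U : Fin M → Fin nu → ℂ) (X : Fin M → Fin nx → ℂ) (Y : Fin M → Fin ny → ℂ)
    (z : ℂ)
    (hctrb : (ctrbMat A B).rank = nx)
    (hspec : ∀ k : Fin M, specExp M k • X k
          = (A.map Complex.ofReal).mulVec (X k) + (B.map Complex.ofReal).mulVec (U k)
            + specExp M k • (fun i => (x0 i : ℂ) - (x2M i : ℂ)) ∧
        Y k = (C.map Complex.ofReal).mulVec (X k) + (D.map Complex.ofReal).mulVec (U k))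
    (hL0 : obsIndex nx ny A C ≤ L0)
    (hPE : (PsiMat (L0 + 1 + nx) M
              (fun k => Sum.elim (U k) (fun _ : Unit => specExp M k))).rank
        = Fintype.card (Fin (L0 + 1 + nx) × (Fin nu ⊕ Unit)))
    (hz : z ∉ spectrum ℂ (A.map Complex.ofReal)) :
    let Ttrue : Fin ny → ℂ :=
      ((C.map Complex.ofReal)
        * (z • (1 : Matrix (Fin nx) (Fin nx) ℂ) - A.map Complex.ofReal)⁻¹).mulVec
        (z • fun i => (x0 i : ℂ) - (x2M i : ℂ))
    (∃ G : (Fin M ⊕ Fin (M - 1)) → ℂ,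
      (PsiMat (L0 + 1) M U).mulVec G = 0 ∧
      (PsiMat (L0 + 1) M (fun k (_ : Unit) => specExp M k)).mulVec G
        = (fun p => z ^ (p.1 : ℕ) * z) ∧
      (PsiMat (L0 + 1) M Y).mulVec G = (fun p => z ^ (p.1 : ℕ) * Ttrue p.2)) ∧
    (∀ (Tz : Fin ny → ℂ) (G : (Fin M ⊕ Fin (M - 1)) → ℂ),
      ((PsiMat (L0 + 1) M U).mulVec G = 0 ∧
       (PsiMat (L0 + 1) M (fun k (_ : Unit) => specExp M k)).mulVec G
        = (fun p => z ^ (p.1 : ℕ) * z) ∧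
       (PsiMat (L0 + 1) M Y).mulVec G = (fun p => z ^ (p.1 : ℕ) * Tz p.2)) →
      Tz = Ttrue) := by
  intro Ttrue
  classical
  set ξ : Fin nx → ℂ := fun i => (x0 i : ℂ) - (x2M i : ℂ) with hξdef
  set Vf : Fin M → (Fin nu ⊕ Unit) → ℂ := fun k => Sum.elim (U k) (fun _ => specExp M k)
    with hVf
  set μ : Fin M ⊕ Fin (M - 1) → ℂ := TransAux.colWt M with hμ
  set ws : Fin M ⊕ Fin (M - 1) → (Fin nu ⊕ Unit) → ℂ := TransAux.colS Vf with hws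
  set xs : Fin M ⊕ Fin (M - 1) → Fin nx → ℂ := TransAux.colS X with hxs
  set us : Fin M ⊕ Fin (M - 1) → Fin nu → ℂ := TransAux.colS U with hus
  set ys : Fin M ⊕ Fin (M - 1) → Fin ny → ℂ := TransAux.colS Y with hys
  set Bt : Matrix (Fin nx) (Fin nu ⊕ Unit) ℂ :=
    Matrix.of (fun i => Sum.elim (fun q => (B.map Complex.ofReal) i q) (fun _ => ξ i))
    with hBtdef
  have hBt : ∀ v : (Fin nu ⊕ Unit) → ℂ, Bt *ᵥ v
      = (B.map Complex.ofReal) *ᵥ (fun q => v (Sum.inl q)) + v (Sum.inr ()) • ξ := by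
    intro v
    funext j
    rw [hBtdef]
    simp only [Matrix.mulVec, dotProduct, Fintype.sum_sum_type, Matrix.of_apply,
      Sum.elim_inl, Sum.elim_inr, Pi.add_apply, Pi.smul_apply, smul_eq_mul,
      Finset.univ_unique, Finset.sum_singleton]
    ring
  have hwsl : ∀ c p, ws c (Sum.inl p) = us c p := by
    rw [hws, hus, hVf]
    rintro (k | k) p <;> rfl
  have hwsr : ∀ c, ws c (Sum.inr ()) = μ c := by
    rw [hws, hμ, hVf]
    rintro (k | k) <;> rfl
  have hΩcol : ∀ c, TransAux.colS (fun (k : Fin M) (_ : Unit) => specExp M k) c () = μ c := by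
    rw [hμ]
    rintro (k | k) <;> rfl
  have hξconj : ∀ j, (starRingEnd ℂ) (ξ j) = ξ j := by
    intro j
    rw [hξdef]
    simp [map_sub, Complex.conj_ofReal]
  have hdyn : ∀ c, μ c • xs c = (A.map Complex.ofReal) *ᵥ xs c + Bt *ᵥ ws c := by
    rintro (k | k)
    · rw [hBt]
      have e0 : μ (Sum.inl k) = specExp M k := by rw [hμ]; rfl
      have e1 : xs (Sum.inl k) = X k := by rw [hxs]; rfl
      have e2 : (fun q => ws (Sum.inl k) (Sum.inl q)) = U k := by rw [hws, hVf]; rfl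
      have e3 : ws (Sum.inl k) (Sum.inr ()) = specExp M k := by rw [hws, hVf]; rfl
      rw [e0, e1, e2, e3, ← add_assoc]
      exact (hspec k).1
    · have hk1 : k.1 + 1 < M := by have := k.isLt; omega
      have h1 := (hspec ⟨k.1 + 1, hk1⟩).1
      rw [hBt]
      have e0 : μ (Sum.inr k) = (starRingEnd ℂ) (specExp M (k.1 + 1)) := by rw [hμ]; rfl
      have e1 : xs (Sum.inr k) = fun j => (starRingEnd ℂ) (X ⟨k.1 + 1, hk1⟩ j) := by
        rw [hxs]; rfl
      have e2 : (fun q => ws (Sum.inr k) (Sum.inl q))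
          = fun q => (starRingEnd ℂ) (U ⟨k.1 + 1, hk1⟩ q) := by rw [hws, hVf]; rfl
      have e3 : ws (Sum.inr k) (Sum.inr ())
          = (starRingEnd ℂ) (specExp M (k.1 + 1)) := by rw [hws, hVf]; rfl
      rw [e0, e1, e2, e3]
      funext j
      have h2 := congrFun h1 j
      simp only [Pi.add_apply, Pi.smul_apply, smul_eq_mul] at h2
      have h3 := congrArg (starRingEnd ℂ) h2
      simp only [map_add, _root_.map_mul] at h3
      rw [TransAux.conj_mulVec_real A (X ⟨k.1 + 1, hk1⟩) j,
        TransAux.conj_mulVec_real B (U ⟨k.1 + 1, hk1⟩) j, hξconj j] at h3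
      simp only [Pi.add_apply, Pi.smul_apply, smul_eq_mul]
      linear_combination h3
  have hout : ∀ c, ys c = (C.map Complex.ofReal) *ᵥ xs c + (D.map Complex.ofReal) *ᵥ us c := by
    rintro (k | k)
    · have e1 : ys (Sum.inl k) = Y k := by rw [hys]; rfl
      have e2 : xs (Sum.inl k) = X k := by rw [hxs]; rfl
      have e3 : us (Sum.inl k) = U k := by rw [hus]; rfl
      rw [e1, e2, e3]
      exact (hspec k).2
    · have hk1 : k.1 + 1 < M := by have := k.isLt; omega
      have h1 := (hspec ⟨k.1 + 1, hk1⟩).2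
      have e1 : ys (Sum.inr k) = fun p => (starRingEnd ℂ) (Y ⟨k.1 + 1, hk1⟩ p) := by
        rw [hys]; rfl
      have e2 : xs (Sum.inr k) = fun j => (starRingEnd ℂ) (X ⟨k.1 + 1, hk1⟩ j) := by
        rw [hxs]; rfl
      have e3 : us (Sum.inr k) = fun q => (starRingEnd ℂ) (U ⟨k.1 + 1, hk1⟩ q) := by
        rw [hus]; rfl
      rw [e1, e2, e3]
      funext p
      have h2 := congrFun h1 p
      have h3 := congrArg (starRingEnd ℂ) h2
      simp only [Pi.add_apply, map_add] at h3
      rw [TransAux.conj_mulVec_real C (X ⟨k.1 + 1, hk1⟩) p,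
        TransAux.conj_mulVec_real D (U ⟨k.1 + 1, hk1⟩) p] at h3
      simpa using h3
  have hunit : IsUnit (z • (1 : Matrix (Fin nx) (Fin nx) ℂ) - A.map Complex.ofReal).det := by
    have h0 := spectrum.notMem_iff.mp hz
    rw [Algebra.algebraMap_eq_smul_one] at h0
    exact (Matrix.isUnit_iff_isUnit_det _).mp h0
  set P : Fin nx → ℂ :=
    (z • (1 : Matrix (Fin nx) (Fin nx) ℂ) - A.map Complex.ofReal)⁻¹ *ᵥ (z • ξ) with hPdef
  have hMinv : (z • (1 : Matrix (Fin nx) (Fin nx) ℂ) - A.map Complex.ofReal) *ᵥ P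
      = z • ξ := by
    rw [hPdef, Matrix.mulVec_mulVec, Matrix.mul_nonsing_inv _ hunit, Matrix.one_mulVec]
  have hPstep : ∀ j, ((A.map Complex.ofReal) *ᵥ P) j + z * ξ j = z * P j := by
    intro j
    have h2 := congrFun hMinv j
    simp only [Matrix.sub_mulVec, Matrix.smul_mulVec, Matrix.one_mulVec, Pi.sub_apply,
      Pi.smul_apply, smul_eq_mul] at h2
    linear_combination -h2
  have hTt : Ttrue = (C.map Complex.ofReal) *ᵥ P := by
    rw [hPdef, Matrix.mulVec_mulVec, hξdef]
  have hinj : ∀ u v : Fin nx → ℂ,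
      (z • (1 : Matrix (Fin nx) (Fin nx) ℂ) - A.map Complex.ofReal) *ᵥ u
        = (z • (1 : Matrix (Fin nx) (Fin nx) ℂ) - A.map Complex.ofReal) *ᵥ v → u = v := by
    intro u v huv
    have h2 := congrArg
      (fun t => (z • (1 : Matrix (Fin nx) (Fin nx) ℂ) - A.map Complex.ofReal)⁻¹ *ᵥ t) huv
    simpa [Matrix.mulVec_mulVec, Matrix.nonsing_inv_mul _ hunit, Matrix.one_mulVec] using h2
  have hPE' : ∀ g : ℕ → (Fin nu ⊕ Unit) → ℂ,
      (∀ c, ∑ i ∈ Finset.range (L0 + 1 + nx), ∑ q, g i q * (μ c ^ i * ws c q) = 0) →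
      ∀ i, i < L0 + 1 + nx → ∀ q, g i q = 0 := by
    intro g hg i hi q
    have hy : (fun r : Fin (L0 + 1 + nx) × (Fin nu ⊕ Unit) => g r.1 r.2)
        ᵥ* PsiMat (L0 + 1 + nx) M Vf = 0 := by
      funext c
      show ∑ r : Fin (L0 + 1 + nx) × (Fin nu ⊕ Unit),
        g r.1 r.2 * PsiMat (L0 + 1 + nx) M Vf r c = 0
      calc ∑ r : Fin (L0 + 1 + nx) × (Fin nu ⊕ Unit),
            g r.1 r.2 * PsiMat (L0 + 1 + nx) M Vf r c
          = ∑ i' : Fin (L0 + 1 + nx), ∑ q', g i' q' * (μ c ^ (i' : ℕ) * ws c q') := by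
            rw [Fintype.sum_prod_type]
            apply Finset.sum_congr rfl
            intro i' _
            apply Finset.sum_congr rfl
            intro q' _
            rw [TransAux.psi_apply, hμ, hws]
        _ = ∑ i' ∈ Finset.range (L0 + 1 + nx), ∑ q', g i' q' * (μ c ^ i' * ws c q') :=
            Fin.sum_univ_eq_sum_range (fun i' => ∑ q', g i' q' * (μ c ^ i' * ws c q')) _
        _ = 0 := hg c
    have hker := TransAux.leftker_of_rank _ hPE _ hy
    have h2 := congrFun hker (⟨i, hi⟩, q)
    simpa using h2
  have hB' : ∀ b : Fin nx → ℂ,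
      (∀ m, m < nx → (b ᵥ* ((A.map Complex.ofReal) ^ m)) ᵥ* Bt = 0) → b = 0 := by
    intro b hb
    have hbB : ∀ m, m < nx →
        b ᵥ* ((A.map Complex.ofReal) ^ m * (B.map Complex.ofReal)) = 0 := by
      intro m hm
      rw [← Matrix.vecMul_vecMul]
      funext q
      have h2 := congrFun (hb m hm) (Sum.inl q)
      exact h2
    have hsurj := TransAux.surj_of_rank_real (ctrbMat A B)
      (by rw [hctrb, Fintype.card_fin])
    funext j
    obtain ⟨gv, hgv⟩ := hsurj (fun i' => if i' = j then (1 : ℝ) else 0)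
    have expand : ∀ i, (Complex.ofReal (if i = j then (1 : ℝ) else 0))
        = ∑ r : Fin nx × Fin nu, (gv r : ℂ) * (((A ^ (r.1 : ℕ) * B) i r.2 : ℝ) : ℂ) := by
      intro i
      have h2 := congrFun hgv i
      rw [← h2]
      show ((∑ r : Fin nx × Fin nu, ctrbMat A B i r * gv r : ℝ) : ℂ) = _
      push_cast
      apply Finset.sum_congr rfl
      intro r _
      have : ctrbMat A B i r = (A ^ (r.1 : ℕ) * B) i r.2 := rfl
      rw [this]
      ring
    have hbj : b j = ∑ i, b i * (Complex.ofReal (if i = j then (1 : ℝ) else 0)) := by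
      have he : ∀ i, (Complex.ofReal (if i = j then (1 : ℝ) else 0)) = if i = j then 1 else 0 := by
        intro i
        by_cases hij : i = j <;> simp [hij]
      simp only [he, mul_ite, mul_one, mul_zero]
      rw [Finset.sum_ite_eq' Finset.univ j b]
      simp
    rw [hbj]
    calc ∑ i, b i * (Complex.ofReal (if i = j then (1 : ℝ) else 0))
        = ∑ i, b i * ∑ r : Fin nx × Fin nu,
            (gv r : ℂ) * (((A ^ ((r.1 : Fin nx) : ℕ) * B) i r.2 : ℝ) : ℂ) := by
          apply Finset.sum_congr rfl
          intro i _
          rw [expand i]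
      _ = ∑ r : Fin nx × Fin nu, (gv r : ℂ)
            * ∑ i, b i * (((A ^ (r.1 : ℕ) * B) i r.2 : ℝ) : ℂ) := by
          simp_rw [Finset.mul_sum]
          rw [Finset.sum_comm]
          apply Finset.sum_congr rfl
          intro r _
          apply Finset.sum_congr rfl
          intro i _
          ring
      _ = 0 := by
          apply Finset.sum_eq_zero
          intro r _
          have h3 : ∑ i, b i * (((A ^ (r.1 : ℕ) * B) i r.2 : ℝ) : ℂ) = 0 := by
            have h4 := congrFun (hbB (r.1 : ℕ) r.1.isLt) r.2
            rw [← TransAux.map_pow_mul A B (r.1 : ℕ)] at h4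
            exact h4
          rw [h3, mul_zero]
  have uniq : ∀ (Tz : Fin ny → ℂ) (G : (Fin M ⊕ Fin (M - 1)) → ℂ),
      ((PsiMat (L0 + 1) M U).mulVec G = 0 ∧
       (PsiMat (L0 + 1) M (fun k (_ : Unit) => specExp M k)).mulVec G
        = (fun p => z ^ (p.1 : ℕ) * z) ∧
       (PsiMat (L0 + 1) M Y).mulVec G = (fun p => z ^ (p.1 : ℕ) * Tz p.2)) →
      Tz = Ttrue := by
    rintro Tz G ⟨hU, hΩG, hY⟩
    have hrowU : ∀ i, i ≤ L0 → TransAux.Ssum μ us G i = 0 := by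
      intro i hi
      funext p
      have h2 := congrFun hU (⟨i, by omega⟩, p)
      rw [TransAux.psi_mulVec] at h2
      have h3 : ∑ c, TransAux.colWt M c ^ i * TransAux.colS U c p * G c = 0 := h2
      show ∑ c, μ c ^ i * us c p * G c = 0
      rw [hμ, hus]
      exact h3
    have hrowΩ : ∀ i, i ≤ L0 → TransAux.Ssum μ ws G i (Sum.inr ()) = z ^ i * z := by
      intro i hi
      have h2 := congrFun hΩG (⟨i, by omega⟩, ())
      rw [TransAux.psi_mulVec] at h2
      have h3 : ∑ c, TransAux.colWt M c ^ i
          * TransAux.colS (fun k (_ : Unit) => specExp M k) c () * G c = z ^ i * z := h2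
      show ∑ c, μ c ^ i * ws c (Sum.inr ()) * G c = z ^ i * z
      rw [← h3]
      apply Finset.sum_congr rfl
      intro c _
      rw [hwsr c, hΩcol c, hμ]
    have hSwsl : ∀ (i : ℕ) p, TransAux.Ssum μ ws G i (Sum.inl p)
        = TransAux.Ssum μ us G i p := by
      intro i p
      apply Finset.sum_congr rfl
      intro c _
      rw [hwsl]
    have hBtS : ∀ i, i ≤ L0 → Bt *ᵥ TransAux.Ssum μ ws G i = (z ^ i * z) • ξ := by
      intro i hi
      rw [hBt]
      have e1 : (fun q => TransAux.Ssum μ ws G i (Sum.inl q)) = 0 := by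
        funext q
        rw [hSwsl i q]
        exact congrFun (hrowU i hi) q
      rw [e1, Matrix.mulVec_zero, zero_add, hrowΩ i hi]
    have hErec := TransAux.Esum_rec (A.map Complex.ofReal) Bt μ ws xs hdyn G
    have hCrow : ∀ i, i ≤ L0 →
        (C.map Complex.ofReal) *ᵥ TransAux.Esum μ xs G i = fun p => z ^ i * Tz p := by
      intro i hi
      funext p
      have h2 := congrFun hY (⟨i, by omega⟩, p)
      rw [TransAux.psi_mulVec] at h2
      have h3 : ∑ c, μ c ^ i * ys c p * G c = z ^ i * Tz p := by
        rw [hμ, hys]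
        exact h2
      have h4 := TransAux.out_sum (C.map Complex.ofReal) (D.map Complex.ofReal)
        μ xs us ys hout G i p
      rw [hrowU i hi, Matrix.mulVec_zero] at h4
      rw [h3] at h4
      simpa using h4.symm
    have hζrec : ∀ i, i ≤ L0 →
        (TransAux.Esum μ xs G (i + 1) - z ^ (i + 1) • P)
          = (A.map Complex.ofReal) *ᵥ (TransAux.Esum μ xs G i - z ^ i • P) := by
      intro i hi
      rw [hErec i, hBtS i hi, Matrix.mulVec_sub, Matrix.mulVec_smul]
      funext j
      simp only [Pi.add_apply, Pi.sub_apply, Pi.smul_apply, smul_eq_mul]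
      linear_combination (z ^ i) * (hPstep j)
    have hζpow : ∀ i, i ≤ L0 →
        (TransAux.Esum μ xs G i - z ^ i • P)
          = ((A.map Complex.ofReal) ^ i) *ᵥ (TransAux.Esum μ xs G 0 - z ^ 0 • P) := by
      intro i
      induction i with
      | zero => intro _; rw [pow_zero (A.map Complex.ofReal), Matrix.one_mulVec]
      | succ n ih =>
        intro hn
        rw [hζrec n (by omega), ih (by omega), Matrix.mulVec_mulVec, ← pow_succ']
    have hCζ : ∀ i, i ≤ L0 →
        ((C.map Complex.ofReal) * (A.map Complex.ofReal) ^ i)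
            *ᵥ (TransAux.Esum μ xs G 0 - z ^ 0 • P)
          = fun p => z ^ i * (Tz p - Ttrue p) := by
      intro i hi
      rw [← Matrix.mulVec_mulVec, ← hζpow i hi, Matrix.mulVec_sub, Matrix.mulVec_smul,
        hCrow i hi, hTt]
      funext p
      simp only [Pi.sub_apply, Pi.smul_apply, smul_eq_mul]
      ring
    set ζ0 : Fin nx → ℂ := TransAux.Esum μ xs G 0 - z ^ 0 • P with hζ0def
    have hw0 : ∀ i, i < L0 → ((C.map Complex.ofReal) * (A.map Complex.ofReal) ^ i)
        *ᵥ ((z • (1 : Matrix (Fin nx) (Fin nx) ℂ) - A.map Complex.ofReal) *ᵥ ζ0) = 0 := by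
      intro i hi
      rw [Matrix.mulVec_mulVec]
      rw [show ((C.map Complex.ofReal) * (A.map Complex.ofReal) ^ i)
            * (z • (1 : Matrix (Fin nx) (Fin nx) ℂ) - A.map Complex.ofReal)
          = z • ((C.map Complex.ofReal) * (A.map Complex.ofReal) ^ i)
            - (C.map Complex.ofReal) * (A.map Complex.ofReal) ^ (i + 1) from by
        rw [Matrix.mul_sub, Matrix.mul_smul, Matrix.mul_one, Matrix.mul_assoc, ← pow_succ]]
      rw [Matrix.sub_mulVec, Matrix.smul_mulVec, hCζ i (by omega), hCζ (i + 1) (by omega)]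
      funext p
      simp only [Pi.sub_apply, Pi.smul_apply, smul_eq_mul, Pi.zero_apply]
      ring
    have hreal : ∀ i : ℕ, ((C.map Complex.ofReal) * (A.map Complex.ofReal) ^ i)
        *ᵥ ((z • (1 : Matrix (Fin nx) (Fin nx) ℂ) - A.map Complex.ofReal) *ᵥ ζ0) = 0 := by
      have hre : (fun j => (((z • (1 : Matrix (Fin nx) (Fin nx) ℂ) - A.map Complex.ofReal)
          *ᵥ ζ0) j).re) ∈ TransAux.NK A C L0 := by
        rw [TransAux.mem_NK]
        intro i hi
        have h2 := hw0 i hi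
        rw [← TransAux.map_mul_pow C A i] at h2
        exact ((TransAux.mulVec_map_eq_zero_iff _ _).mp h2).1
      have him : (fun j => (((z • (1 : Matrix (Fin nx) (Fin nx) ℂ) - A.map Complex.ofReal)
          *ᵥ ζ0) j).im) ∈ TransAux.NK A C L0 := by
        rw [TransAux.mem_NK]
        intro i hi
        have h2 := hw0 i hi
        rw [← TransAux.map_mul_pow C A i] at h2
        exact ((TransAux.mulVec_map_eq_zero_iff _ _).mp h2).2
      have h1 := TransAux.key_obs A C hL0 _ hre
      have h2 := TransAux.key_obs A C hL0 _ him
      intro i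
      rw [← TransAux.map_mul_pow C A i]
      exact (TransAux.mulVec_map_eq_zero_iff _ _).mpr ⟨h1 i, h2 i⟩
    set Nc : Submodule ℂ (Fin nx → ℂ) := ⨅ i : ℕ,
      LinearMap.ker (Matrix.mulVecLin ((C.map Complex.ofReal) * (A.map Complex.ofReal) ^ i))
      with hNcdef
    have hmemN : ∀ v : Fin nx → ℂ, v ∈ Nc ↔ ∀ i : ℕ,
        ((C.map Complex.ofReal) * (A.map Complex.ofReal) ^ i) *ᵥ v = 0 := by
      intro v
      rw [hNcdef]
      simp [Submodule.mem_iInf, LinearMap.mem_ker, Matrix.mulVecLin_apply]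
    have hNcmem : ((z • (1 : Matrix (Fin nx) (Fin nx) ℂ) - A.map Complex.ofReal) *ᵥ ζ0)
        ∈ Nc := (hmemN _).mpr hreal
    have hstab : ∀ v ∈ Nc,
        (z • (1 : Matrix (Fin nx) (Fin nx) ℂ) - A.map Complex.ofReal).mulVecLin v ∈ Nc := by
      intro v hv
      rw [hmemN] at hv ⊢
      intro i
      rw [Matrix.mulVecLin_apply, Matrix.mulVec_mulVec]
      rw [show ((C.map Complex.ofReal) * (A.map Complex.ofReal) ^ i)
            * (z • (1 : Matrix (Fin nx) (Fin nx) ℂ) - A.map Complex.ofReal)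
          = z • ((C.map Complex.ofReal) * (A.map Complex.ofReal) ^ i)
            - (C.map Complex.ofReal) * (A.map Complex.ofReal) ^ (i + 1) from by
        rw [Matrix.mul_sub, Matrix.mul_smul, Matrix.mul_one, Matrix.mul_assoc, ← pow_succ]]
      rw [Matrix.sub_mulVec, Matrix.smul_mulVec, hv i, hv (i + 1)]
      simp
    have hζ0N : ζ0 ∈ Nc := by
      have hfinj : Function.Injective
          (((z • (1 : Matrix (Fin nx) (Fin nx) ℂ) - A.map Complex.ofReal).mulVecLin).restrict
            hstab) := by
        intro u v huv
        apply Subtype.ext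
        apply hinj
        have h2 := congrArg Subtype.val huv
        simp only [LinearMap.restrict_coe_apply, Matrix.mulVecLin_apply] at h2
        exact h2
      have hfsurj := (LinearMap.injective_iff_surjective).mp hfinj
      obtain ⟨u, hu⟩ := hfsurj ⟨_, hNcmem⟩
      have h2 : (z • (1 : Matrix (Fin nx) (Fin nx) ℂ) - A.map Complex.ofReal) *ᵥ (u : Fin nx → ℂ)
          = (z • (1 : Matrix (Fin nx) (Fin nx) ℂ) - A.map Complex.ofReal) *ᵥ ζ0 := by
        have h3 := congrArg Subtype.val hu
        simpa only [LinearMap.restrict_coe_apply, Matrix.mulVecLin_apply] using h3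
      have h4 := hinj _ _ h2
      rw [← h4]
      exact u.2
    funext p
    have h2 := congrFun (hCζ 0 (by omega)) p
    rw [hmemN] at hζ0N
    have h3 := congrFun (hζ0N 0) p
    rw [h2] at h3
    have h4 : Tz p - Ttrue p = 0 := by
      have : (z : ℂ) ^ 0 * (Tz p - Ttrue p) = 0 := h3
      simpa using this
    exact sub_eq_zero.mp h4
  refine ⟨?_, uniq⟩
  set Km : Matrix ((Fin (L0 + 1) × (Fin nu ⊕ Unit)) ⊕ Fin nx) (Fin M ⊕ Fin (M - 1)) ℂ :=
    Matrix.of (fun r c => Sum.elim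
      (fun iq : Fin (L0 + 1) × (Fin nu ⊕ Unit) => μ c ^ (iq.1 : ℕ) * ws c iq.2)
      (fun j => xs c j) r) with hKmdef
  have hker : ∀ y, y ᵥ* Km = 0 → y = 0 := by
    intro y hy
    set f₀ : ℕ → (Fin nu ⊕ Unit) → ℂ :=
      fun i q => if h : i < L0 + 1 then y (Sum.inl (⟨i, h⟩, q)) else 0 with hf₀def
    have hsupp : ∀ i, L0 + 1 ≤ i → f₀ i = 0 := by
      intro i hi
      funext q
      rw [hf₀def]
      simp only
      rw [dif_neg (by omega)]
      rfl
    have hrel : ∀ c, (∑ i ∈ Finset.range (L0 + 1 + nx), ∑ q, f₀ i q * (μ c ^ i * ws c q))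
        + (fun j => y (Sum.inr j)) ⬝ᵥ xs c = 0 := by
      intro c
      have h3 : ∑ r, y r * Km r c = 0 := congrFun hy c
      rw [Fintype.sum_sum_type] at h3
      simp only [hKmdef, Matrix.of_apply, Sum.elim_inl, Sum.elim_inr] at h3
      have e1 : ∑ i ∈ Finset.range (L0 + 1 + nx), ∑ q, f₀ i q * (μ c ^ i * ws c q)
          = ∑ a : Fin (L0 + 1) × (Fin nu ⊕ Unit),
              y (Sum.inl a) * (μ c ^ (a.1 : ℕ) * ws c a.2) := by
        rw [show L0 + 1 + nx = (L0 + 1) + nx from rfl, Finset.sum_range_add]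
        have e2 : ∑ i ∈ Finset.range nx,
            ∑ q, f₀ ((L0 + 1) + i) q * (μ c ^ ((L0 + 1) + i) * ws c q) = 0 := by
          apply Finset.sum_eq_zero
          intro i _
          apply Finset.sum_eq_zero
          intro q _
          rw [hf₀def]
          simp only
          rw [dif_neg (by omega), zero_mul]
        rw [e2, add_zero,
          ← Fin.sum_univ_eq_sum_range (fun i => ∑ q, f₀ i q * (μ c ^ i * ws c q)) (L0 + 1),
          Fintype.sum_prod_type]
        apply Finset.sum_congr rfl
        intro i _
        apply Finset.sum_congr rfl
        intro q _
        rw [hf₀def]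
        simp only
        rw [dif_pos i.isLt]
      rw [e1]
      exact h3
    have happ := TransAux.kernel_triv (L0 + 1) (by omega) (A.map Complex.ofReal) Bt μ ws xs
      hdyn hPE' hB' f₀ hsupp (fun j => y (Sum.inr j)) hrel
    funext r
    cases r with
    | inl iq =>
      obtain ⟨i, q⟩ := iq
      have h5 := congrFun (happ.1 (i : ℕ)) q
      rw [hf₀def] at h5
      simp only at h5
      rw [dif_pos i.isLt] at h5
      simpa using h5
    | inr j => exact congrFun happ.2 j
  have hsurj := TransAux.mulVec_surj_of_leftker Km hker
  obtain ⟨G, hG⟩ := hsurj (Sum.elim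
    (fun iq : Fin (L0 + 1) × (Fin nu ⊕ Unit) =>
      Sum.elim (fun _ : Fin nu => (0 : ℂ)) (fun _ => z ^ (iq.1 : ℕ) * z) iq.2)
    P)
  have hrowK : ∀ (i : Fin (L0 + 1)) (q : Fin nu ⊕ Unit),
      ∑ c, μ c ^ (i : ℕ) * ws c q * G c
        = Sum.elim (fun _ : Fin nu => (0 : ℂ)) (fun _ => z ^ (i : ℕ) * z) q := by
    intro i q
    exact congrFun hG (Sum.inl (i, q))
  have hrowX : ∀ j, ∑ c, xs c j * G c = P j := fun j => congrFun hG (Sum.inr j)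
  have hrU : ∀ i, i ≤ L0 → TransAux.Ssum μ us G i = 0 := by
    intro i hi
    funext p
    have h3 : ∑ c, μ c ^ i * ws c (Sum.inl p) * G c = 0 := hrowK ⟨i, by omega⟩ (Sum.inl p)
    show ∑ c, μ c ^ i * us c p * G c = 0
    rw [← h3]
    apply Finset.sum_congr rfl
    intro c _
    rw [hwsl]
  have hrΩ : ∀ i, i ≤ L0 → TransAux.Ssum μ ws G i (Sum.inr ()) = z ^ i * z := by
    intro i hi
    exact hrowK ⟨i, by omega⟩ (Sum.inr ())
  have hSwsl : ∀ (i : ℕ) p, TransAux.Ssum μ ws G i (Sum.inl p)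
      = TransAux.Ssum μ us G i p := by
    intro i p
    apply Finset.sum_congr rfl
    intro c _
    rw [hwsl]
  have hBtS : ∀ i, i ≤ L0 → Bt *ᵥ TransAux.Ssum μ ws G i = (z ^ i * z) • ξ := by
    intro i hi
    rw [hBt]
    have e1 : (fun q => TransAux.Ssum μ ws G i (Sum.inl q)) = 0 := by
      funext q
      rw [hSwsl i q]
      exact congrFun (hrU i hi) q
    rw [e1, Matrix.mulVec_zero, zero_add, hrΩ i hi]
  have hErec := TransAux.Esum_rec (A.map Complex.ofReal) Bt μ ws xs hdyn G
  have hE0 : TransAux.Esum μ xs G 0 = P := by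
    funext j
    calc TransAux.Esum μ xs G 0 j = ∑ c, μ c ^ 0 * xs c j * G c := rfl
      _ = ∑ c, xs c j * G c := by
          apply Finset.sum_congr rfl
          intro c _
          rw [pow_zero, one_mul]
      _ = P j := hrowX j
  have hEi : ∀ i, i ≤ L0 → TransAux.Esum μ xs G i = z ^ i • P := by
    intro i
    induction i with
    | zero =>
      intro _
      rw [hE0]
      funext j
      simp
    | succ n ih =>
      intro hn
      rw [hErec n, hBtS n (by omega), ih (by omega), Matrix.mulVec_smul]
      funext j
      simp only [Pi.add_apply, Pi.smul_apply, smul_eq_mul]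
      linear_combination (z ^ n) * hPstep j
  refine ⟨G, ?_, ?_, ?_⟩
  · funext r
    obtain ⟨i, p⟩ := r
    show (PsiMat (L0 + 1) M U *ᵥ G) (i, p) = (0 : ℂ)
    rw [TransAux.psi_mulVec]
    have h2 : ∑ c, μ c ^ (i : ℕ) * ws c (Sum.inl p) * G c = 0 := hrowK i (Sum.inl p)
    calc ∑ c, TransAux.colWt M c ^ (i : ℕ) * TransAux.colS U c p * G c
        = ∑ c, μ c ^ (i : ℕ) * ws c (Sum.inl p) * G c := by
          apply Finset.sum_congr rfl
          intro c _
          rw [hwsl c p, hμ, hus]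
      _ = 0 := h2
  · funext r
    obtain ⟨i, u⟩ := r
    cases u
    show (PsiMat (L0 + 1) M (fun k (_ : Unit) => specExp M k) *ᵥ G) (i, ())
      = z ^ (i : ℕ) * z
    rw [TransAux.psi_mulVec]
    have h2 : ∑ c, μ c ^ (i : ℕ) * ws c (Sum.inr ()) * G c = z ^ (i : ℕ) * z :=
      hrowK i (Sum.inr ())
    calc ∑ c, TransAux.colWt M c ^ (i : ℕ)
          * TransAux.colS (fun k (_ : Unit) => specExp M k) c () * G c
        = ∑ c, μ c ^ (i : ℕ) * ws c (Sum.inr ()) * G c := by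
          apply Finset.sum_congr rfl
          intro c _
          rw [hΩcol c, hwsr c, hμ]
      _ = z ^ (i : ℕ) * z := h2
  · funext r
    obtain ⟨i, p⟩ := r
    show (PsiMat (L0 + 1) M Y *ᵥ G) (i, p) = z ^ (i : ℕ) * Ttrue p
    rw [TransAux.psi_mulVec]
    have hi' : (i : ℕ) ≤ L0 := by have := i.isLt; omega
    have h4 := TransAux.out_sum (C.map Complex.ofReal) (D.map Complex.ofReal)
      μ xs us ys hout G (i : ℕ) p
    rw [hrU _ hi', Matrix.mulVec_zero, hEi _ hi', Matrix.mulVec_smul] at h4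
    calc ∑ c, TransAux.colWt M c ^ (i : ℕ) * TransAux.colS Y c p * G c
        = ∑ c, μ c ^ (i : ℕ) * ys c p * G c := by rw [hμ, hys]
      _ = z ^ (i : ℕ) * Ttrue p := by
          rw [h4, hTt]
          simp
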